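/- Let A be an n×m real matrix satisfying the spark condition for sparsity k (every min(m,2k) columns are linearly independent), with k ≤ n. Let S1,...,Sk be k-element subsets of {1,...,m}. Then for almost every (with respect to Lebesgue measure) choice of coefficient vectors t_1,...,t_k ∈ R^k, the k vectors y_j = Σ_{i=1}^k (t_j)_i A_{S_j^i} (where S_j^1 < ... < S_j^k are the elements of S_j and A_ℓ denotes the ℓ-th column of A) are linearly independent. -/

import Mathlib

open MeasureTheory

lemma mvpoly_zero_measure : ∀ {N : ℕ} (p : MvPolynomial (Fin N) ℝ), p ≠ 0 →
    volume {x : Fin N → ℝ | MvPolynomial.eval x p = 0} = 0 := by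
  intro N
  induction N with
  | zero =>
    intro p hp
    obtain ⟨c, rfl⟩ := MvPolynomial.C_surjective (Fin 0) p
    have hc : c ≠ 0 := fun h => hp (by simp [h])
    simp [hc]
  | succ N ih =>
    intro p hp
    set q := MvPolynomial.finSuccEquiv ℝ N p with hq
    have hq0 : q ≠ 0 := by
      intro h
      exact hp ((MvPolynomial.finSuccEquiv ℝ N).injective (by simpa [hq] using h))
    set Z : Set (ℝ × (Fin N → ℝ)) :=
      {y | MvPolynomial.eval (Fin.cons y.1 y.2) p = 0} with hZdef
    have hcont : Continuous fun y : ℝ × (Fin N → ℝ) => MvPolynomial.eval (Fin.cons y.1 y.2) p := by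
      apply (MvPolynomial.continuous_eval p).comp
      refine continuous_pi fun i => ?_
      refine Fin.cases ?_ (fun j => ?_) i
      · simpa using continuous_fst
      · simpa using (continuous_apply j).comp' continuous_snd
    have hZ : MeasurableSet Z := hcont.measurable (measurableSet_singleton 0)
    have hmp := MeasureTheory.volume_preserving_piFinSuccAbove (fun _ : Fin (N + 1) => ℝ) 0
    have hpre : (MeasurableEquiv.piFinSuccAbove (fun _ : Fin (N+1) => ℝ) 0) ⁻¹' Z
        = {x : Fin (N+1) → ℝ | MvPolynomial.eval x p = 0} := by
      ext x
      simp only [Set.mem_preimage, hZdef, Set.mem_setOf_eq, MeasurableEquiv.piFinSuccAbove_apply,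
        Fin.insertNthEquiv, Equiv.coe_fn_symm_mk]
      rw [Fin.removeNth_zero, Fin.cons_self_tail]
    have key : (volume.prod volume) Z = 0 := by
      rw [Measure.measure_prod_null hZ]
      have hbadfin : Set.Finite {a : ℝ | Polynomial.eval (MvPolynomial.C a) q = 0} := by
        have hroots := Polynomial.finite_setOf_isRoot (R := MvPolynomial (Fin N) ℝ) hq0
        exact hroots.preimage (Set.injOn_of_injective (MvPolynomial.C_injective _ ℝ))
      have hbad : (volume : Measure ℝ) {a | Polynomial.eval (MvPolynomial.C a) q = 0} = 0 :=
        hbadfin.measure_zero _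
      have hae : ∀ᵐ a : ℝ, Polynomial.eval (MvPolynomial.C a) q ≠ 0 := by
        rw [ae_iff]; simpa using hbad
      filter_upwards [hae] with a ha
      have hslice : (Prod.mk a ⁻¹' Z) =
          {s : Fin N → ℝ | MvPolynomial.eval s (Polynomial.eval (MvPolynomial.C a) q) = 0} := by
        ext s
        simp only [Set.mem_preimage, hZdef, Set.mem_setOf_eq]
        rw [MvPolynomial.eval_eq_eval_mv_eval']
        rw [Polynomial.eval_map, show (a : ℝ) = MvPolynomial.eval s (MvPolynomial.C a) by simp,
          Polynomial.eval₂_hom]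
        simp [hq]
      simp only [Pi.zero_apply]
      rw [hslice]
      exact ih _ ha
    have hpm := hmp.measure_preimage hZ.nullMeasurableSet
    rw [hpre] at hpm
    rw [hpm]
    exact key


lemma measurePreserving_uncurryFin (k : ℕ) :
    MeasurePreserving
      (fun (t : Fin k → Fin k → ℝ) (v : Fin (k * k)) =>
        t (finProdFinEquiv.symm v).1 (finProdFinEquiv.symm v).2)
      volume volume := by
  set e := (finProdFinEquiv : Fin k × Fin k ≃ Fin (k * k))
  set Ψ := fun (t : Fin k → Fin k → ℝ) (v : Fin (k * k)) => t (e.symm v).1 (e.symm v).2 with hΨ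
  have hmeas : Measurable Ψ := by
    refine measurable_pi_iff.mpr fun v => ?_
    exact (measurable_pi_apply _).comp (measurable_pi_apply _)
  refine ⟨hmeas, ?_⟩
  have : (volume : Measure (Fin (k*k) → ℝ)) = Measure.pi fun _ => volume := rfl
  rw [this]
  refine (Measure.pi_eq fun s hs => ?_).symm
  rw [Measure.map_apply hmeas (MeasurableSet.univ_pi hs)]
  have hpre : Ψ ⁻¹' (Set.univ.pi s) =
      Set.univ.pi fun j : Fin k => Set.univ.pi fun i : Fin k => s (e (j, i)) := by
    ext t
    simp only [Set.mem_preimage, Set.mem_univ_pi, hΨ]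
    constructor
    · intro h j i
      have := h (e (j, i))
      simpa using this
    · intro h v
      have := h (e.symm v).1 (e.symm v).2
      simpa using this
  rw [hpre, volume_pi_pi]
  have : ∀ j : Fin k, volume (Set.univ.pi fun i : Fin k => s (e (j, i)))
      = ∏ i : Fin k, volume (s (e (j, i))) := fun j => volume_pi_pi _
  simp_rw [this]
  rw [← Fintype.prod_prod_type fun p : Fin k × Fin k => volume (s (e p))]
  exact Equiv.prod_comp e fun v => volume (s v)

/-- A vector is `k`-sparse if it has at most `k` nonzero entries. -/
def KSparse {m : ℕ} (k : ℕ) (a : Fin m → ℝ) : Prop :=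
  (Finset.univ.filter fun i => a i ≠ 0).card ≤ k

theorem stmt15 {n m k : ℕ} (hkn : k ≤ n)
    (A : Matrix (Fin n) (Fin m) ℝ)
    (hA : ∀ a₁ a₂ : Fin m → ℝ, KSparse k a₁ → KSparse k a₂ →
      A.mulVec a₁ = A.mulVec a₂ → a₁ = a₂)
    (S : Fin k → Finset (Fin m)) (hS : ∀ j, (S j).card = k) :
    volume {t : Fin k → Fin k → ℝ |
      ¬ LinearIndependent ℝ (fun j : Fin k =>
          ∑ i : Fin k, t j i • A.transpose (((S j).orderIsoOfFin (hS j) i : {x // x ∈ S j}) : Fin m))} = 0 := by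
  classical
  set B : Fin k → Fin k → Fin n → ℝ := fun j i =>
    A.transpose (((S j).orderIsoOfFin (hS j) i : {x // x ∈ S j}) : Fin m) with hB
  show volume {t : Fin k → Fin k → ℝ |
      ¬ LinearIndependent ℝ (fun j : Fin k => ∑ i : Fin k, t j i • B j i)} = 0
  -- each B j is linearly independent
  have hBli : ∀ j, LinearIndependent ℝ (B j) := by
    intro j
    rw [Fintype.linearIndependent_iff]
    intro g hg
    set E : Fin k ≃ {x // x ∈ S j} := ((S j).orderIsoOfFin (hS j)).toEquiv with hE
    set a : Fin m → ℝ := fun ℓ => if h : ℓ ∈ S j then g (E.symm ⟨ℓ, h⟩) else 0 with ha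
    have hsp : KSparse k a := by
      unfold KSparse
      rw [← hS j]
      apply Finset.card_le_card
      intro ℓ hℓ
      rw [Finset.mem_filter] at hℓ
      by_contra hns
      exact hℓ.2 (by simp [ha, hns])
    have hsp0 : KSparse k (0 : Fin m → ℝ) := by simp [KSparse]
    have hmv : A.mulVec a = A.mulVec 0 := by
      rw [Matrix.mulVec_zero]
      funext c
      have h1 : A.mulVec a c = ∑ ℓ ∈ S j, A c ℓ * a ℓ := by
        rw [Matrix.mulVec, dotProduct]
        refine (Finset.sum_subset (Finset.subset_univ (S j)) ?_).symm
        intro ℓ _ hℓ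
        simp [ha, hℓ]
      have h2 : ∑ ℓ ∈ S j, A c ℓ * a ℓ = ∑ i : Fin k, A c (E i) * a (E i) := by
        rw [← Finset.sum_attach (S j) (fun ℓ => A c ℓ * a ℓ)]
        exact (Equiv.sum_comp E fun x => A c x * a x).symm
      have h3 : ∀ i : Fin k, a (E i) = g i := by
        intro i
        have hmem : ((E i : {x // x ∈ S j}) : Fin m) ∈ S j := (E i).2
        rw [ha]
        simp only [hmem, dif_pos]
        congr 1
        rw [show (⟨(E i : Fin m), hmem⟩ : {x // x ∈ S j}) = E i from Subtype.ext rfl,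
          Equiv.symm_apply_apply]
      rw [h1, h2]
      have := congrFun hg c
      simp only [Finset.sum_apply, Pi.smul_apply, Pi.zero_apply, smul_eq_mul] at this
      rw [Pi.zero_apply]
      rw [← this]
      refine Finset.sum_congr rfl fun i _ => ?_
      rw [h3 i]
      exact mul_comm _ _
    have ha0 : a = 0 := hA a 0 hsp hsp0 hmv
    intro i
    have hmem : ((E i : {x // x ∈ S j}) : Fin m) ∈ S j := (E i).2
    have : a (E i) = g i := by
      rw [ha]
      simp only [hmem, dif_pos]
      congr 1
      rw [show (⟨(E i : Fin m), hmem⟩ : {x // x ∈ S j}) = E i from Subtype.ext rfl,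
        Equiv.symm_apply_apply]
    rw [← this, ha0, Pi.zero_apply]
  -- greedy construction
  have grow : ∀ r (hrk : r ≤ k), ∃ v : Fin r → (Fin n → ℝ),
      (∀ i : Fin r, v i ∈ Submodule.span ℝ (Set.range (B (Fin.castLE hrk i)))) ∧
      LinearIndependent ℝ v := by
    intro r
    induction r with
    | zero => exact fun _ => ⟨Fin.elim0, fun i => i.elim0, linearIndependent_empty_type⟩
    | succ r ihr =>
      intro hrk
      obtain ⟨v, hv, hvi⟩ := ihr (Nat.le_of_succ_le hrk)
      set jlast : Fin k := ⟨r, hrk⟩ with hjlast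
      have hspan : ¬ (Submodule.span ℝ (Set.range (B jlast)) ≤ Submodule.span ℝ (Set.range v)) := by
        intro hle
        have h1 : Module.finrank ℝ (Submodule.span ℝ (Set.range (B jlast))) = k := by
          rw [finrank_span_eq_card (hBli jlast)]; simp
        have h2 : Module.finrank ℝ (Submodule.span ℝ (Set.range v)) ≤ r := by
          simpa [Set.finrank] using finrank_range_le_card v
        have h3 := Submodule.finrank_mono hle
        omega
      obtain ⟨x, hxV, hxs⟩ := SetLike.not_le_iff_exists.mp hspan
      refine ⟨Fin.snoc v x, ?_, ?_⟩
      · intro i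
        refine Fin.lastCases ?_ (fun i => ?_) i
        · rw [show Fin.castLE hrk (Fin.last r) = jlast from rfl]
          simpa using hxV
        · rw [show Fin.castLE hrk (Fin.castSucc i) = Fin.castLE (Nat.le_of_succ_le hrk) i from rfl]
          simpa using hv i
      · rw [linearIndependent_fin_snoc]; exact ⟨hvi, hxs⟩
  obtain ⟨v, hv, hvi⟩ := grow k le_rfl
  have hv' : ∀ j : Fin k, v j ∈ Submodule.span ℝ (Set.range (B j)) := by
    intro j
    have := hv j
    rwa [show Fin.castLE le_rfl j = j from Fin.ext rfl] at this
  choose t₀ ht₀ using fun j => Submodule.mem_span_range_iff_exists_fun ℝ |>.mp (hv' j)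
  -- the Gram polynomial
  set e := (finProdFinEquiv : Fin k × Fin k ≃ Fin (k * k)) with he
  set P : MvPolynomial (Fin (k * k)) ℝ :=
    (Matrix.of fun j l : Fin k => ∑ c : Fin n,
      (∑ i : Fin k, MvPolynomial.X (e (j, i)) * MvPolynomial.C (B j i c)) *
      (∑ i : Fin k, MvPolynomial.X (e (l, i)) * MvPolynomial.C (B l i c))).det with hP
  set Ψ := fun (t : Fin k → Fin k → ℝ) (v : Fin (k * k)) =>
    t (finProdFinEquiv.symm v).1 (finProdFinEquiv.symm v).2 with hΨ
  set M : (Fin k → Fin k → ℝ) → Matrix (Fin k) (Fin n) ℝ :=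
    fun t => Matrix.of fun j c => ∑ i : Fin k, t j i * B j i c with hM
  have heval : ∀ t : Fin k → Fin k → ℝ,
      MvPolynomial.eval (Ψ t) P = (M t * (M t).transpose).det := by
    intro t
    have hc : ∀ (j i : Fin k), Ψ t (e (j, i)) = t j i := by
      intro j i
      rw [hΨ, he]
      simp
    rw [hP, RingHom.map_det]
    congr 1
    ext j l
    simp only [RingHom.mapMatrix_apply, Matrix.map_apply, Matrix.of_apply, map_sum, map_mul,
      MvPolynomial.eval_X, MvPolynomial.eval_C, Matrix.mul_apply, Matrix.transpose_apply, hM]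
    apply Finset.sum_congr rfl
    intro c _
    congr 1
    · apply Finset.sum_congr rfl
      intro i _
      rw [hc]
    · apply Finset.sum_congr rfl
      intro i _
      rw [hc]
  -- sum representation of the family
  have hy : ∀ (t : Fin k → Fin k → ℝ) (j : Fin k),
      (∑ i : Fin k, t j i • B j i) = fun c => M t j c := by
    intro t j
    funext c
    simp [hM, Finset.sum_apply]
  -- det ≠ 0 → linear independent
  have hdet_li : ∀ t : Fin k → Fin k → ℝ, (M t * (M t).transpose).det ≠ 0 →
      LinearIndependent ℝ (fun j : Fin k => ∑ i : Fin k, t j i • B j i) := by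
    intro t hdet
    rw [Fintype.linearIndependent_iff]
    intro g hg
    have hu : (M t).transpose.mulVec g = 0 := by
      funext c
      have := congrFun hg c
      simp only [Finset.sum_apply, Pi.zero_apply] at this
      simp only [Matrix.mulVec, dotProduct, Matrix.transpose_apply, Pi.zero_apply]
      rw [← this]
      refine Finset.sum_congr rfl fun j _ => ?_
      rw [hy t j]
      exact mul_comm _ _
    have h0 : (M t * (M t).transpose).mulVec g = 0 := by
      rw [← Matrix.mulVec_mulVec, hu, Matrix.mulVec_zero]
    have := Matrix.eq_zero_of_mulVec_eq_zero hdet h0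
    intro i; rw [this]; rfl
  -- linear independent → det ≠ 0
  have hli_det : ∀ t : Fin k → Fin k → ℝ,
      LinearIndependent ℝ (fun j : Fin k => ∑ i : Fin k, t j i • B j i) →
      (M t * (M t).transpose).det ≠ 0 := by
    intro t hli hdet0
    obtain ⟨g, hg0, hgv⟩ := (Matrix.exists_mulVec_eq_zero_iff).mpr hdet0
    have hu : (M t).transpose.mulVec g = 0 := by
      have h1 : dotProduct g ((M t * (M t).transpose).mulVec g) = 0 := by
        rw [hgv]; simp [dotProduct]
      rw [← Matrix.mulVec_mulVec, Matrix.dotProduct_mulVec, ← Matrix.mulVec_transpose] at h1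
      exact dotProduct_self_eq_zero.mp h1
    have hg : (∑ j : Fin k, g j • (∑ i : Fin k, t j i • B j i)) = 0 := by
      funext c
      have := congrFun hu c
      simp only [Matrix.mulVec, dotProduct, Matrix.transpose_apply, Pi.zero_apply] at this
      simp only [Finset.sum_apply, Pi.smul_apply, Pi.zero_apply, smul_eq_mul]
      rw [← this]
      refine Finset.sum_congr rfl fun j _ => ?_
      exact mul_comm _ _
    exact hg0 (funext (Fintype.linearIndependent_iff.mp hli g hg))
  -- P is nonzero
  have hP0 : P ≠ 0 := by
    intro h0
    have h1 : MvPolynomial.eval (Ψ t₀) P = 0 := by rw [h0]; simp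
    rw [heval t₀] at h1
    refine hli_det t₀ ?_ h1
    have : (fun j : Fin k => ∑ i : Fin k, t₀ j i • B j i) = v := funext fun j => ht₀ j
    rw [this]
    exact hvi
  -- conclude
  have hsub : {t : Fin k → Fin k → ℝ |
      ¬ LinearIndependent ℝ (fun j : Fin k => ∑ i : Fin k, t j i • B j i)} ⊆
      Ψ ⁻¹' {x : Fin (k * k) → ℝ | MvPolynomial.eval x P = 0} := by
    intro t ht
    simp only [Set.mem_preimage, Set.mem_setOf_eq]
    by_contra hne
    exact ht (hdet_li t (by rwa [heval t] at hne))
  refine measure_mono_null hsub ?_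
  have hms : MeasurableSet {x : Fin (k * k) → ℝ | MvPolynomial.eval x P = 0} :=
    (MvPolynomial.continuous_eval P).measurable (measurableSet_singleton 0)
  rw [(measurePreserving_uncurryFin k).measure_preimage hms.nullMeasurableSet]
  exact mvpoly_zero_measure P hP0
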